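/- Let L₁ = b₁ + M₁ and L₂ = b₂ + M₂ be two linear sets in ℤ^n with a non-degenerate intersection, i.e., dim(L₁) = dim(L₁ ∩ L₂) = dim(L₂). Then there exist finite sets R₁ of interior vectors of M₁ and R₂ of interior vectors of M₂ such that for every x₁ ∈ L₁ and x₂ ∈ L₂ the sets x₁ + R₁* and x₂ + R₂* have a non-empty intersection. -/

import Mathlib

open scoped Pointwise

/-- The finite set `B` generates the set `V` as a ℚ-vector space. -/
def GeneratesQ {n : ℕ} (B : Finset (Fin n → ℚ)) (V : Set (Fin n → ℚ)) : Prop :=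
  (Submodule.span ℚ (B : Set (Fin n → ℚ)) : Set (Fin n → ℚ)) = V

/-- The rank of a vector space `V ⊆ ℚ^n`: minimal cardinality of a finite generating set. -/
noncomputable def rankOf {n : ℕ} (V : Set (Fin n → ℚ)) : ℕ :=
  sInf {d | ∃ B : Finset (Fin n → ℚ), B.card = d ∧ GeneratesQ B V}

-- Dimension of a subset of ℚ^n via finite covers by translates of vector spaces.
open Classical in
noncomputable def dimQ {n : ℕ} (X : Set (Fin n → ℚ)) : WithBot ℕ :=
  if X = ∅ then ⊥ else
    ↑(sInf {d : ℕ | ∃ (k : ℕ) (V : Fin k → Submodule ℚ (Fin n → ℚ))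
        (a : Fin k → (Fin n → ℚ)),
        (∀ j, rankOf ((V j : Set (Fin n → ℚ))) ≤ d) ∧
        X ⊆ ⋃ j, (a j +ᵥ (V j : Set (Fin n → ℚ)))})

/-- Dimension of a subset of ℤ^n, via the canonical embedding ℤ^n → ℚ^n. -/
noncomputable def dimZ {n : ℕ} (X : Set (Fin n → ℤ)) : WithBot ℕ :=
  dimQ ((fun (x : Fin n → ℤ) (i : Fin n) => (x i : ℚ)) '' X)

/-- `a` is an interior vector of the monoid `M ⊆ ℤ^n`. -/
def IsInteriorZ {n : ℕ} (M : Set (Fin n → ℤ)) (a : Fin n → ℤ) : Prop :=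
  a ∈ M ∧ ∀ x ∈ M, ∃ N : ℕ, 1 ≤ N ∧ ∃ m ∈ M, N • a = x + m

/-- `M` is a finitely generated (additive sub)monoid of ℤ^n (as a set). -/
def IsFGMonoid {n : ℕ} (M : Set (Fin n → ℤ)) : Prop :=
  ∃ P : Finset (Fin n → ℤ),
    M = (AddSubmonoid.closure (P : Set (Fin n → ℤ)) : Set (Fin n → ℤ))

/-- `L` is a linearization of the pseudo-linear set `X`. -/
def IsLinearization {n : ℕ} (L X : Set (Fin n → ℤ)) : Prop :=
  ∃ (b : Fin n → ℤ) (M : Set (Fin n → ℤ)), IsFGMonoid M ∧ L = b +ᵥ M ∧ X ⊆ L ∧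
    ∀ R : Finset (Fin n → ℤ), (∀ r ∈ R, IsInteriorZ M r) →
      ∃ x ∈ X, x +ᵥ (AddSubmonoid.closure (R : Set (Fin n → ℤ)) : Set (Fin n → ℤ)) ⊆ X

/-- `X ⊆ ℤ^n` is pseudo-linear. -/
def IsPseudoLinear {n : ℕ} (X : Set (Fin n → ℤ)) : Prop :=
  ∃ L, IsLinearization L X
variable {n : ℕ}

/-- embedding ℤ^n → ℚ^n as an AddMonoidHom -/
def iQ {n : ℕ} : (Fin n → ℤ) →+ (Fin n → ℚ) where
  toFun x i := (x i : ℚ)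
  map_zero' := by ext i; simp
  map_add' x y := by ext i; push_cast; simp

lemma iQ_apply (x : Fin n → ℤ) (i : Fin n) : iQ x i = (x i : ℚ) := rfl

lemma iQ_inj : Function.Injective (iQ (n := n)) := by
  intro x y h
  funext i
  have := congrFun h i
  rw [iQ_apply, iQ_apply] at this
  exact_mod_cast this

lemma iQ_nsmul (c : ℕ) (x : Fin n → ℤ) : iQ (c • x) = (c : ℚ) • iQ x := by
  ext i; simp [iQ_apply]

/-- membership in closure of finite set via enumeration -/
lemma mem_closure_iff_combo {k : ℕ} (p : Fin k → (Fin n → ℤ)) (P : Finset (Fin n → ℤ))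
    (hp : Set.range p = (P : Set (Fin n → ℤ))) (x : Fin n → ℤ) :
    x ∈ AddSubmonoid.closure (P : Set (Fin n → ℤ)) ↔
      ∃ u : Fin k → ℕ, x = ∑ i, u i • p i := by
  constructor
  · intro hx
    induction hx using AddSubmonoid.closure_induction with
    | mem y hy =>
      rw [← hp] at hy
      obtain ⟨i, rfl⟩ := hy
      exact ⟨Pi.single i 1, by simp [Pi.single_apply, Finset.sum_ite_eq', ite_smul]⟩
    | zero => exact ⟨0, by simp⟩
    | add y z hy hz ihy ihz =>
      obtain ⟨u, rfl⟩ := ihy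
      obtain ⟨v, rfl⟩ := ihz
      exact ⟨u + v, by simp [add_smul, Finset.sum_add_distrib]⟩
  · rintro ⟨u, rfl⟩
    exact sum_mem fun i _ => AddSubmonoid.nsmul_mem _
      (AddSubmonoid.subset_closure (by rw [← hp]; exact ⟨i, rfl⟩)) _

/-- all-positive combinations are interior -/
lemma interior_of_pos_combo {k : ℕ} (p : Fin k → (Fin n → ℤ)) (P : Finset (Fin n → ℤ))
    (hp : Set.range p = (P : Set (Fin n → ℤ)))
    (c : Fin k → ℕ) (hc : ∀ i, 1 ≤ c i) :
    IsInteriorZ (AddSubmonoid.closure (P : Set (Fin n → ℤ)) : Set (Fin n → ℤ))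
      (∑ i, c i • p i) := by
  constructor
  · exact (mem_closure_iff_combo p P hp _).2 ⟨c, rfl⟩
  · intro x hx
    obtain ⟨u, rfl⟩ := (mem_closure_iff_combo p P hp x).1 hx
    classical
    set N : ℕ := 1 + (Finset.univ.sup u) with hN
    refine ⟨N, by omega, ∑ i, (N * c i - u i) • p i,
      (mem_closure_iff_combo p P hp _).2 ⟨_, rfl⟩, ?_⟩
    rw [Finset.smul_sum, ← Finset.sum_add_distrib]
    refine Finset.sum_congr rfl fun i _ => ?_
    rw [smul_smul, ← add_smul]
    congr 1
    have h1 : u i < N := by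
      have := Finset.le_sup (f := u) (Finset.mem_univ i)
      omega
    have h2 : N ≤ N * c i := Nat.le_mul_of_pos_right _ (hc i)
    omega

/-- interior + monoid element is interior -/
lemma interior_add_mem {M : Set (Fin n → ℤ)} (hM : ∃ S : AddSubmonoid (Fin n → ℤ), M = S)
    {a m : Fin n → ℤ} (ha : IsInteriorZ M a) (hm : m ∈ M) : IsInteriorZ M (a + m) := by
  obtain ⟨S, rfl⟩ := hM
  refine ⟨S.add_mem ha.1 hm, fun x hx => ?_⟩
  obtain ⟨N, hN, m', hm', hEq⟩ := ha.2 x hx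
  refine ⟨N, hN, m' + N • m, S.add_mem hm' (AddSubmonoid.nsmul_mem _ hm _), ?_⟩
  rw [smul_add, hEq]
  abel
/-- Dickson-type lemma: every subset of ℕ^k has a finite subset of lower bounds. -/
lemma dickson : ∀ (k : ℕ) (S : Set (Fin k → ℕ)), ∃ F : Finset (Fin k → ℕ),
    ↑F ⊆ S ∧ ∀ w ∈ S, ∃ w₀ ∈ F, w₀ ≤ w := by
  intro k
  induction k with
  | zero =>
    intro S
    classical
    by_cases h : S.Nonempty
    · obtain ⟨s, hs⟩ := h
      exact ⟨{s}, by simpa, fun w hw => ⟨s, Finset.mem_singleton_self s,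
        fun i => i.elim0⟩⟩
    · exact ⟨∅, by simp, fun w hw => absurd ⟨w, hw⟩ h⟩
  | succ k ih =>
    intro S
    classical
    by_cases h : S.Nonempty
    swap
    · exact ⟨∅, by simp, fun w hw => absurd ⟨w, hw⟩ h⟩
    obtain ⟨s, hs⟩ := h
    choose F' hF'sub hF'dom using fun (i : Fin (k+1)) (v : ℕ) =>
      ih {u : Fin k → ℕ | i.insertNth v u ∈ S}
    refine ⟨insert s (Finset.univ.biUnion fun i : Fin (k+1) =>
      (Finset.range (s i)).biUnion fun v => (F' i v).image (i.insertNth v)), ?_, ?_⟩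
    · intro w hw
      simp only [Finset.coe_insert, Set.mem_insert_iff, Finset.coe_biUnion,
        Finset.mem_coe, Finset.mem_univ, Set.iUnion_true, Set.mem_iUnion,
        Finset.mem_image, Finset.mem_range] at hw
      rcases hw with rfl | ⟨i, v, hv, u, hu, rfl⟩
      · exact hs
      · exact hF'sub i v hu
    · intro w hw
      by_cases hsw : s ≤ w
      · exact ⟨s, Finset.mem_insert_self _ _, hsw⟩
      · have : ∃ i, w i < s i := by
          by_contra hc
          push_neg at hc
          exact hsw fun i => hc i
        obtain ⟨i, hi⟩ := this
        have hmem : i.removeNth w ∈ {u : Fin k → ℕ | i.insertNth (w i) u ∈ S} := by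
          simp [Fin.insertNth_self_removeNth, hw]
        obtain ⟨u₀, hu₀, hle⟩ := hF'dom i (w i) _ hmem
        refine ⟨i.insertNth (w i) u₀, ?_, ?_⟩
        · refine Finset.mem_insert_of_mem ?_
          refine Finset.mem_biUnion.2 ⟨i, Finset.mem_univ i, ?_⟩
          exact Finset.mem_biUnion.2 ⟨w i, Finset.mem_range.2 hi,
            Finset.mem_image.2 ⟨u₀, hu₀, rfl⟩⟩
        · rw [Fin.insertNth_le_iff]
          exact ⟨le_rfl, fun j => hle j⟩
lemma range_enum (P : Finset (Fin n → ℤ)) :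
    Set.range (fun i : Fin P.card => (P.equivFin.symm i : Fin n → ℤ)) = (P : Set (Fin n → ℤ)) := by
  ext x
  constructor
  · rintro ⟨i, rfl⟩
    exact (P.equivFin.symm i).2
  · intro hx
    exact ⟨P.equivFin ⟨x, hx⟩, by simp⟩

lemma exists_finite_decomp (b₁ b₂ : Fin n → ℤ) (P₁ P₂ : Finset (Fin n → ℤ)) :
    ∃ F : Finset (Fin n → ℤ),
      ∀ x, x ∈ (b₁ +ᵥ ((AddSubmonoid.closure (P₁ : Set (Fin n → ℤ)) : Set (Fin n → ℤ))))
          ∩ (b₂ +ᵥ ((AddSubmonoid.closure (P₂ : Set (Fin n → ℤ)) : Set (Fin n → ℤ)))) →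
        ∃ f ∈ F, (x - f) ∈ AddSubmonoid.closure ((P₁ : Set (Fin n → ℤ)))
          ∧ (x - f) ∈ AddSubmonoid.closure ((P₂ : Set (Fin n → ℤ))) := by
  classical
  set k₁ := P₁.card
  set k₂ := P₂.card
  set p : Fin k₁ → (Fin n → ℤ) := fun i => (P₁.equivFin.symm i : Fin n → ℤ) with hpdef
  set q : Fin k₂ → (Fin n → ℤ) := fun j => (P₂.equivFin.symm j : Fin n → ℤ) with hqdef
  have hp : Set.range p = (P₁ : Set (Fin n → ℤ)) := range_enum P₁
  have hq : Set.range q = (P₂ : Set (Fin n → ℤ)) := range_enum P₂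
  set S : Set (Fin (k₁ + k₂) → ℕ) := {w | b₁ + ∑ i, w (Fin.castAdd k₂ i) • p i
    = b₂ + ∑ j, w (Fin.natAdd k₁ j) • q j} with hSdef
  obtain ⟨Fw, hFwsub, hFwdom⟩ := dickson (k₁ + k₂) S
  refine ⟨Fw.image (fun w₀ => b₁ + ∑ i, w₀ (Fin.castAdd k₂ i) • p i), ?_⟩
  rintro x ⟨hx1, hx2⟩
  obtain ⟨m₁, hm₁, rfl⟩ : ∃ m₁ ∈ AddSubmonoid.closure (P₁ : Set (Fin n → ℤ)), b₁ + m₁ = x := by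
    simpa [Set.mem_vadd_set] using hx1
  obtain ⟨m₂, hm₂, hx2'⟩ : ∃ m₂ ∈ AddSubmonoid.closure (P₂ : Set (Fin n → ℤ)), b₂ + m₂ = b₁ + m₁ := by
    simpa [Set.mem_vadd_set] using hx2
  obtain ⟨u, rfl⟩ := (mem_closure_iff_combo p P₁ hp m₁).1 hm₁
  obtain ⟨v, rfl⟩ := (mem_closure_iff_combo q P₂ hq m₂).1 hm₂
  set w : Fin (k₁ + k₂) → ℕ := fun j => Fin.addCases u v j with hwdef
  have hwS : w ∈ S := by
    simp only [hSdef, Set.mem_setOf_eq, hwdef, Fin.addCases_left, Fin.addCases_right]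
    exact hx2'.symm
  obtain ⟨w₀, hw₀F, hw₀le⟩ := hFwdom w hwS
  refine ⟨b₁ + ∑ i, w₀ (Fin.castAdd k₂ i) • p i, Finset.mem_image_of_mem _ hw₀F, ?_, ?_⟩
  · have : (b₁ + ∑ i, u i • p i) - (b₁ + ∑ i, w₀ (Fin.castAdd k₂ i) • p i)
        = ∑ i, (u i - w₀ (Fin.castAdd k₂ i)) • p i := by
      rw [add_sub_add_left_eq_sub, ← Finset.sum_sub_distrib]
      refine Finset.sum_congr rfl fun i _ => ?_
      have hle : w₀ (Fin.castAdd k₂ i) ≤ u i := by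
        have := hw₀le (Fin.castAdd k₂ i)
        simpa [hwdef, Fin.addCases_left] using this
      rw [sub_nsmul _ hle, sub_eq_add_neg]
    rw [this]
    exact (mem_closure_iff_combo p P₁ hp _).2 ⟨_, rfl⟩
  · have hw₀S : w₀ ∈ S := hFwsub hw₀F
    simp only [hSdef, Set.mem_setOf_eq] at hw₀S
    have : (b₁ + ∑ i, u i • p i) - (b₁ + ∑ i, w₀ (Fin.castAdd k₂ i) • p i)
        = ∑ j, (v j - w₀ (Fin.natAdd k₁ j)) • q j := by
      rw [← hx2', hw₀S, add_sub_add_left_eq_sub, ← Finset.sum_sub_distrib]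
      refine Finset.sum_congr rfl fun j _ => ?_
      have hle : w₀ (Fin.natAdd k₁ j) ≤ v j := by
        have := hw₀le (Fin.natAdd k₁ j)
        simpa [hwdef, Fin.addCases_right] using this
      rw [sub_nsmul _ hle, sub_eq_add_neg]
    rw [this]
    exact (mem_closure_iff_combo q P₂ hq _).2 ⟨_, rfl⟩
open Module in
lemma rankOf_coe_le_finrank (W : Submodule ℚ (Fin n → ℚ)) :
    ∃ B : Finset (Fin n → ℚ), B.card = finrank ℚ W ∧ GeneratesQ B (W : Set (Fin n → ℚ)) := by
  classical
  set r := finrank ℚ W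
  let b : Basis (Fin r) ℚ W := finBasis ℚ W
  have hinj : Function.Injective (fun i : Fin r => (b i : Fin n → ℚ)) :=
    fun i j h => b.injective (Subtype.val_injective h)
  refine ⟨Finset.univ.image (fun i => (b i : Fin n → ℚ)), ?_, ?_⟩
  · rw [Finset.card_image_of_injective _ hinj]
    simp
  · unfold GeneratesQ
    have : (Finset.univ.image (fun i => (b i : Fin n → ℚ)) : Set (Fin n → ℚ))
        = W.subtype '' (Set.range b) := by
      ext x; simp [Set.range_comp, Submodule.coe_subtype]
    rw [this, ← Submodule.map_span, b.span_eq, Submodule.map_top, Submodule.range_subtype]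

lemma finrank_le_of_generates {B : Finset (Fin n → ℚ)} {W : Submodule ℚ (Fin n → ℚ)}
    (h : GeneratesQ B (W : Set (Fin n → ℚ))) : Module.finrank ℚ W ≤ B.card := by
  have : Submodule.span ℚ (B : Set (Fin n → ℚ)) = W := by
    apply SetLike.coe_injective h
  rw [← this]
  exact finrank_span_finset_le_card B

lemma rankOf_coe_eq_finrank (W : Submodule ℚ (Fin n → ℚ)) :
    rankOf (W : Set (Fin n → ℚ)) = Module.finrank ℚ W := by
  obtain ⟨B, hB, hgen⟩ := rankOf_coe_le_finrank W
  apply le_antisymm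
  · exact Nat.sInf_le ⟨B, hB, hgen⟩
  · have hne : {d | ∃ B : Finset (Fin n → ℚ), B.card = d ∧
        GeneratesQ B (W : Set (Fin n → ℚ))}.Nonempty := ⟨_, B, hB, hgen⟩
    obtain ⟨B', hB', hgen'⟩ := Nat.sInf_mem hne
    rw [rankOf, ← hB']
    exact finrank_le_of_generates hgen'

/-- The covering property underlying `dimQ`. -/
def covP {n : ℕ} (X : Set (Fin n → ℚ)) (d : ℕ) : Prop :=
  ∃ (k : ℕ) (V : Fin k → Submodule ℚ (Fin n → ℚ)) (a : Fin k → (Fin n → ℚ)),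
    (∀ j, rankOf ((V j : Set (Fin n → ℚ))) ≤ d) ∧
    X ⊆ ⋃ j, (a j +ᵥ (V j : Set (Fin n → ℚ)))

lemma dimQ_eq_sInf {X : Set (Fin n → ℚ)} (hX : X ≠ ∅) :
    dimQ X = ↑(sInf {d | covP X d}) := by
  rw [dimQ, if_neg hX]
  rfl

lemma covP_top (X : Set (Fin n → ℚ)) : covP X n := by
  refine ⟨1, fun _ => ⊤, fun _ => 0, fun j => ?_, ?_⟩
  · rw [rankOf_coe_eq_finrank]
    simp [Module.finrank_fin_fun]
  · intro x _
    exact Set.mem_iUnion.2 ⟨0, Set.mem_vadd_set.2 ⟨x, Submodule.mem_top, by simp⟩⟩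

lemma covP_mono {X : Set (Fin n → ℚ)} {d d' : ℕ} (h : covP X d) (hdd : d ≤ d') : covP X d' := by
  obtain ⟨k, V, a, hr, hc⟩ := h
  exact ⟨k, V, a, fun j => (hr j).trans hdd, hc⟩

lemma dimQ_le_of_covP {X : Set (Fin n → ℚ)} {d : ℕ} (h : covP X d) : dimQ X ≤ (d : WithBot ℕ) := by
  by_cases hX : X = ∅
  · rw [dimQ, if_pos hX]; exact bot_le
  · rw [dimQ_eq_sInf hX]
    exact_mod_cast Nat.sInf_le h

lemma covP_of_dimQ {X : Set (Fin n → ℚ)} {d : ℕ} (hX : X ≠ ∅) (h : dimQ X = (d : WithBot ℕ)) :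
    covP X d := by
  rw [dimQ_eq_sInf hX] at h
  have : sInf {d | covP X d} = d := by exact_mod_cast h
  rw [← this]
  have hne : {d | covP X d}.Nonempty := ⟨n, covP_top X⟩
  exact Nat.sInf_mem hne

lemma dimQ_exists_nat {X : Set (Fin n → ℚ)} (hX : X ≠ ∅) : ∃ d : ℕ, dimQ X = (d : WithBot ℕ) :=
  ⟨_, dimQ_eq_sInf hX⟩
open Module in
lemma finrank_le_of_covP (b : Fin n → ℤ) (P : Finset (Fin n → ℤ)) {d : ℕ}
    (h : covP (iQ '' (b +ᵥ (AddSubmonoid.closure (P : Set (Fin n → ℤ)) : Set (Fin n → ℤ)))) d) :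
    finrank ℚ (Submodule.span ℚ (iQ '' (P : Set (Fin n → ℤ)))) ≤ d := by
  classical
  by_contra hlt
  push_neg at hlt
  set r := finrank ℚ (Submodule.span ℚ (iQ '' (P : Set (Fin n → ℤ)))) with hrdef
  have hr1 : 1 ≤ r := by omega
  obtain ⟨s, hs_sub, hs_span, hs_li⟩ := exists_linearIndependent ℚ (iQ '' (P : Set (Fin n → ℤ)))
  have hsfin : s.Finite := hs_li.setFinite
  have hfs : Fintype s := hsfin.fintype
  have hcard : s.toFinset.card = r := by
    rw [hrdef, ← hs_span, finrank_span_set_eq_card hs_li]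
  set g : Fin r → s := fun i =>
    ⟨(s.toFinset.equivFin.symm (Fin.cast hcard.symm i) : Fin n → ℚ), by
      have := (s.toFinset.equivFin.symm (Fin.cast hcard.symm i)).2
      exact Set.mem_toFinset.1 this⟩ with hgdef
  have hginj : Function.Injective g := by
    intro i i' hii
    have h1 : ((g i : Fin n → ℚ)) = (g i' : Fin n → ℚ) := congrArg Subtype.val hii
    have h2 : s.toFinset.equivFin.symm (Fin.cast hcard.symm i)
        = s.toFinset.equivFin.symm (Fin.cast hcard.symm i') := Subtype.ext h1
    have h3 := s.toFinset.equivFin.symm.injective h2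
    simpa [Fin.ext_iff] using h3
  set v : Fin r → (Fin n → ℚ) := fun i => (g i : Fin n → ℚ) with hvdef
  have hv_li : LinearIndependent ℚ v := hs_li.comp g hginj
  have hv_mem : ∀ i, v i ∈ iQ '' (P : Set (Fin n → ℤ)) := fun i => hs_sub (g i).2
  choose pv hpvP hpv using hv_mem
  obtain ⟨k, Vj, aj, hrk, hcov⟩ := h
  set N := k + 1 with hNdef
  set ℓ : (Fin r → ℚ) →ₗ[ℚ] (Fin n → ℚ)
    := ∑ i, LinearMap.smulRight (LinearMap.proj i) (v i) with hldef
  have hℓ : ∀ y, ℓ y = ∑ i, y i • v i := by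
    intro y
    simp [hldef, LinearMap.sum_apply]
  have hinj : Function.Injective ℓ := by
    rw [← LinearMap.ker_eq_bot, LinearMap.ker_eq_bot']
    intro y hy
    rw [hℓ] at hy
    have := Fintype.linearIndependent_iff.1 hv_li y hy
    funext i
    exact this i
  set grid : (Fin r → Fin N) → (Fin n → ℚ) :=
    fun c => iQ b + ℓ (fun i => ((c i : ℕ) : ℚ)) with hgrid
  have hgrid_eq : ∀ c : Fin r → Fin N, grid c = iQ (b + ∑ i, ((c i : ℕ)) • pv i) := by
    intro c
    simp only [hgrid]
    rw [map_add, map_sum, hℓ]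
    congr 1
    refine (Finset.sum_congr rfl fun i _ => ?_).symm
    rw [iQ_nsmul, hpv]
  have hgrid_mem : ∀ c, ∃ j, grid c ∈ aj j +ᵥ (Vj j : Set (Fin n → ℚ)) := by
    intro c
    have hmem : grid c ∈ iQ '' (b +ᵥ (AddSubmonoid.closure (P : Set (Fin n → ℤ))
        : Set (Fin n → ℤ))) := by
      refine ⟨b + ∑ i, ((c i : ℕ)) • pv i, ?_, (hgrid_eq c).symm⟩
      refine Set.mem_vadd_set.2 ⟨∑ i, ((c i : ℕ)) • pv i, ?_, rfl⟩
      exact sum_mem fun i _ => AddSubmonoid.nsmul_mem _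
        (AddSubmonoid.subset_closure (hpvP i)) _
    exact Set.mem_iUnion.1 (hcov hmem)
  set T : Fin k → Finset (Fin r → Fin N) :=
    fun j => Finset.univ.filter (fun c => grid c ∈ aj j +ᵥ (Vj j : Set (Fin n → ℚ))) with hT
  have hunion : (Finset.univ : Finset (Fin r → Fin N)) ⊆ Finset.univ.biUnion T := by
    intro c _
    obtain ⟨j, hj⟩ := hgrid_mem c
    exact Finset.mem_biUnion.2 ⟨j, Finset.mem_univ _,
      Finset.mem_filter.2 ⟨Finset.mem_univ _, hj⟩⟩
  have hTcard : ∀ j, (T j).card ≤ N ^ (r - 1) := by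
    intro j
    set U : Submodule ℚ (Fin r → ℚ) := (Vj j).comap ℓ with hU
    have hfr : finrank ℚ U ≤ d := by
      have h1 : finrank ℚ U = finrank ℚ (U.map ℓ) :=
        (Submodule.equivMapOfInjective ℓ hinj U).finrank_eq
      have h2 : U.map ℓ ≤ Vj j := Submodule.map_comap_le ℓ _
      have h3 : finrank ℚ (U.map ℓ) ≤ finrank ℚ (Vj j) := Submodule.finrank_mono h2
      have h4 : finrank ℚ (Vj j) ≤ d := by
        rw [← rankOf_coe_eq_finrank]
        exact hrk j
      omega
    have hUne : U ≠ ⊤ := by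
      intro hUeq
      rw [hUeq, finrank_top, Module.finrank_fin_fun] at hfr
      omega
    obtain ⟨f, hf0, hfmap⟩ :=
      Submodule.exists_dual_map_eq_bot_of_lt_top (lt_top_iff_ne_top.2 hUne) inferInstance
    have hfU : ∀ y ∈ U, f y = 0 := by
      intro y hy
      have : f y ∈ U.map f := Submodule.mem_map_of_mem hy
      rw [hfmap] at this
      exact (Submodule.mem_bot ℚ).1 this
    have hexp : ∀ y : Fin r → ℚ, f y = ∑ i, y i * f (Pi.single i 1) := by
      intro y
      have hy : y = ∑ i, y i • (Pi.single i 1 : Fin r → ℚ) := by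
        have h5 := Finset.univ_sum_single y
        rw [← h5]
        refine Finset.sum_congr rfl fun i _ => ?_
        ext i'
        by_cases hii : i' = i
        · subst hii; simp
        · simp [Pi.single_apply, hii]
      conv_lhs => rw [hy]
      rw [map_sum]
      refine Finset.sum_congr rfl fun i _ => ?_
      rw [map_smul]
      simp [smul_eq_mul]
    have hi₀ : ∃ i₀, f (Pi.single i₀ 1) ≠ 0 := by
      by_contra hc
      push_neg at hc
      apply hf0
      apply LinearMap.ext
      intro y
      rw [hexp y]
      simp [hc]
    obtain ⟨i₀, hi₀⟩ := hi₀
    have key : ∀ c ∈ T j, ∀ c' ∈ T j, (∀ i : Fin r, i ≠ i₀ → c i = c' i) → c = c' := by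
      intro c hc c' hc' hcc
      have hc1 : grid c ∈ aj j +ᵥ (Vj j : Set (Fin n → ℚ)) := (Finset.mem_filter.1 hc).2
      have hc2 : grid c' ∈ aj j +ᵥ (Vj j : Set (Fin n → ℚ)) := (Finset.mem_filter.1 hc').2
      obtain ⟨w1, hw1, hw1'⟩ := Set.mem_vadd_set.1 hc1
      obtain ⟨w2, hw2, hw2'⟩ := Set.mem_vadd_set.1 hc2
      have hdiff : grid c - grid c' ∈ (Vj j : Set (Fin n → ℚ)) := by
        rw [← hw1', ← hw2']
        have h6 : (aj j +ᵥ w1) - (aj j +ᵥ w2) = w1 - w2 := by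
          simp only [vadd_eq_add]
          abel
        rw [h6]
        exact (Vj j).sub_mem hw1 hw2
      set Δ : Fin r → ℚ := (fun i => ((c i : ℕ) : ℚ)) - (fun i => ((c' i : ℕ) : ℚ)) with hΔ
      have hΔU : Δ ∈ U := by
        have hgg : grid c - grid c' = ℓ Δ := by
          simp only [hgrid, hΔ, map_sub]
          abel
        rw [hU, Submodule.mem_comap, ← hgg]
        exact hdiff
      have hfΔ : f Δ = 0 := hfU Δ hΔU
      rw [hexp] at hfΔ
      have hzero : ∀ i, i ≠ i₀ → Δ i = 0 := by
        intro i hi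
        simp [hΔ, Pi.sub_apply, hcc i hi]
      rw [Finset.sum_eq_single i₀ (fun i _ hi => by rw [hzero i hi]; ring)
        (fun hmem => absurd (Finset.mem_univ i₀) hmem)] at hfΔ
      have hΔ0 : Δ i₀ = 0 := by
        rcases mul_eq_zero.1 hfΔ with h | h
        · exact h
        · exact absurd h hi₀
      have hval : ((c i₀ : ℕ) : ℚ) = ((c' i₀ : ℕ) : ℚ) :=
        sub_eq_zero.1 (by simpa [hΔ, Pi.sub_apply] using hΔ0)
      have hci : c i₀ = c' i₀ := by
        have : (c i₀ : ℕ) = (c' i₀ : ℕ) := by exact_mod_cast hval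
        exact Fin.ext this
      funext i
      by_cases hii : i = i₀
      · rw [hii]; exact hci
      · exact hcc i hii
    have hinj2 : Set.InjOn (fun (c : Fin r → Fin N) => (fun i : {i : Fin r // i ≠ i₀} => c i.1))
        ↑(T j) := by
      intro c hc c' hc' heq
      refine key c (by simpa using hc) c' (by simpa using hc') fun i hi => ?_
      exact congrFun heq ⟨i, hi⟩
    have hcb := Finset.card_le_card_of_injOn
      (fun (c : Fin r → Fin N) => (fun i : {i : Fin r // i ≠ i₀} => c i.1))
      (fun c _ => Finset.mem_univ _) hinj2
    calc (T j).card ≤ (Finset.univ : Finset ({i : Fin r // i ≠ i₀} → Fin N)).card := hcb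
      _ = N ^ (r - 1) := by
        rw [Finset.card_univ, Fintype.card_fun, Fintype.card_fin]
        congr 1
        rw [Fintype.card_subtype_compl, Fintype.card_subtype_eq, Fintype.card_fin]
  have h1 : (Finset.univ : Finset (Fin r → Fin N)).card ≤ k * N ^ (r - 1) := by
    calc (Finset.univ : Finset (Fin r → Fin N)).card
        ≤ (Finset.univ.biUnion T).card := Finset.card_le_card hunion
      _ ≤ ∑ j, (T j).card := Finset.card_biUnion_le
      _ ≤ ∑ _j : Fin k, N ^ (r - 1) := Finset.sum_le_sum fun j _ => hTcard j
      _ = k * N ^ (r - 1) := by simp [Finset.sum_const, Finset.card_univ]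
  have h2 : (Finset.univ : Finset (Fin r → Fin N)).card = N ^ r := by
    rw [Finset.card_univ, Fintype.card_fun, Fintype.card_fin, Fintype.card_fin]
  have h3 : N ^ r = N ^ (r - 1) * N := by
    conv_lhs => rw [show r = (r-1)+1 from (Nat.succ_pred_eq_of_pos hr1).symm]
    rw [pow_succ]
  rw [h2, h3, hNdef] at h1
  have hp : 0 < (k + 1) ^ (r - 1) := pow_pos (by omega) _
  nlinarith [h1, hp]
lemma iQ_zsmul (c : ℤ) (x : Fin n → ℤ) : iQ (c • x) = (c : ℚ) • iQ x := by
  ext i; simp [iQ_apply]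

lemma image_closure_subset_span (P : Finset (Fin n → ℤ)) :
    iQ '' (AddSubmonoid.closure (P : Set (Fin n → ℤ)) : Set (Fin n → ℤ))
      ⊆ (Submodule.span ℚ (iQ '' (P : Set (Fin n → ℤ))) : Set (Fin n → ℚ)) := by
  rintro _ ⟨x, hx, rfl⟩
  obtain ⟨u, rfl⟩ := (mem_closure_iff_combo _ P (range_enum P) x).1 hx
  rw [map_sum]
  refine sum_mem fun i _ => ?_
  rw [iQ_nsmul]
  exact Submodule.smul_mem _ _ (Submodule.subset_span
    ⟨_, (P.equivFin.symm i).2, rfl⟩)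

/-- clearing denominators in a rational span of the image of a submonoid -/
lemma denom_clear {S : AddSubmonoid (Fin n → ℤ)} {z : Fin n → ℤ}
    (hz : iQ z ∈ Submodule.span ℚ (iQ '' (S : Set (Fin n → ℤ)))) :
    ∃ D : ℕ, 1 ≤ D ∧ ∃ mu ∈ S, ∃ mv ∈ S, D • z + mv = mu := by
  classical
  obtain ⟨m, f, g, hsum⟩ := Submodule.mem_span_set'.1 hz
  have hpre : ∀ i : Fin m, ∃ y ∈ S, iQ y = (g i : Fin n → ℚ) := fun i => by
    obtain ⟨y, hy, hiy⟩ := (g i).2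
    exact ⟨y, hy, hiy⟩
  choose my hmyS hmy using hpre
  set D : ℕ := ∏ i, (f i).den with hD
  have hD1 : 1 ≤ D := by
    rw [hD]
    exact Finset.one_le_prod' fun i _ => (f i).den_pos
  set e : Fin m → ℤ := fun i => (f i).num * ((D / (f i).den : ℕ) : ℤ) with he
  have heq : ∀ i, ((e i : ℚ)) = f i * D := by
    intro i
    have hdvd : (f i).den ∣ D := Finset.dvd_prod_of_mem _ (Finset.mem_univ i)
    have hDden : ((f i).den : ℚ) * ((D / (f i).den : ℕ) : ℚ) = (D : ℚ) := by
      rw [← Nat.cast_mul, Nat.mul_div_cancel' hdvd]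
    calc ((e i : ℚ)) = ((f i).num : ℚ) * ((D / (f i).den : ℕ) : ℚ) := by
          rw [he, Int.cast_mul, Int.cast_natCast]
      _ = (f i * (f i).den) * ((D / (f i).den : ℕ) : ℚ) := by rw [Rat.mul_den_eq_num]
      _ = f i * (((f i).den : ℚ) * ((D / (f i).den : ℕ) : ℚ)) := by ring
      _ = f i * D := by rw [hDden]
  have hkey : D • z = ∑ i, e i • my i := by
    apply iQ_inj
    rw [iQ_nsmul, map_sum]
    calc (D : ℚ) • iQ z = (D : ℚ) • ∑ i, f i • (g i : Fin n → ℚ) := by rw [hsum]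
      _ = ∑ i, ((e i : ℚ)) • (g i : Fin n → ℚ) := by
          rw [Finset.smul_sum]
          refine Finset.sum_congr rfl fun i _ => ?_
          rw [smul_smul, heq i, mul_comm]
      _ = ∑ i, iQ (e i • my i) := by
          refine Finset.sum_congr rfl fun i _ => ?_
          rw [iQ_zsmul, hmy i]
  refine ⟨D, hD1, ∑ i, (e i).toNat • my i, ?_, ∑ i, (-(e i)).toNat • my i, ?_, ?_⟩
  · exact sum_mem fun i _ => AddSubmonoid.nsmul_mem _ (hmyS i) _
  · exact sum_mem fun i _ => AddSubmonoid.nsmul_mem _ (hmyS i) _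
  · rw [hkey, ← Finset.sum_add_distrib]
    refine Finset.sum_congr rfl fun i _ => ?_
    rw [← natCast_zsmul (my i) ((-(e i)).toNat), ← natCast_zsmul (my i) ((e i).toNat),
      ← add_smul]
    congr 1
    omega
lemma absorb {P : Finset (Fin n → ℤ)} (a : Fin n → ℤ) {m : Fin n → ℤ}
    (hm : m ∈ AddSubmonoid.closure (P : Set (Fin n → ℤ))) :
    ∃ k : ℕ, ∀ t : ℕ, k ≤ t →
      t • a + m ∈ AddSubmonoid.closure
        ((insert a (P.image (a + ·)) : Finset (Fin n → ℤ)) : Set (Fin n → ℤ)) := by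
  classical
  obtain ⟨u, rfl⟩ := (mem_closure_iff_combo _ P (range_enum P) m).1 hm
  set p : Fin P.card → (Fin n → ℤ) := fun i => (P.equivFin.symm i : Fin n → ℤ) with hp
  refine ⟨∑ i, u i, fun t ht => ?_⟩
  have hmem_a : a ∈ AddSubmonoid.closure
      ((insert a (P.image (a + ·)) : Finset (Fin n → ℤ)) : Set (Fin n → ℤ)) :=
    AddSubmonoid.subset_closure (by simp)
  have hmem_ap : ∀ i, a + p i ∈ AddSubmonoid.closure
      ((insert a (P.image (a + ·)) : Finset (Fin n → ℤ)) : Set (Fin n → ℤ)) := by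
    intro i
    refine AddSubmonoid.subset_closure ?_
    simp only [Finset.coe_insert, Set.mem_insert_iff, Finset.coe_image, Set.mem_image]
    exact Or.inr ⟨p i, (P.equivFin.symm i).2, rfl⟩
  have hkey : t • a + ∑ i, u i • p i
      = (t - ∑ i, u i) • a + ∑ i, u i • (a + p i) := by
    have h1 : ∑ i, u i • (a + p i) = (∑ i, u i) • a + ∑ i, u i • p i := by
      rw [Finset.sum_smul]
      rw [← Finset.sum_add_distrib]
      exact Finset.sum_congr rfl fun i _ => by rw [smul_add]
    rw [h1, ← add_assoc, ← add_nsmul, Nat.sub_add_cancel ht]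
  rw [hkey]
  exact add_mem (AddSubmonoid.nsmul_mem _ hmem_a _)
    (sum_mem fun i _ => AddSubmonoid.nsmul_mem _ (hmem_ap i) _)

lemma dimZ_eq_dimQ (X : Set (Fin n → ℤ)) : dimZ X = dimQ (iQ '' X) := rfl

lemma dimQ_empty : dimQ (∅ : Set (Fin n → ℚ)) = ⊥ := by
  rw [dimQ, if_pos rfl]
theorem stmt11 {n : ℕ} (b₁ b₂ : Fin n → ℤ) (M₁ M₂ : Set (Fin n → ℤ))
    (hM₁ : IsFGMonoid M₁) (hM₂ : IsFGMonoid M₂)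
    (L₁ L₂ : Set (Fin n → ℤ)) (hL₁ : L₁ = b₁ +ᵥ M₁) (hL₂ : L₂ = b₂ +ᵥ M₂)
    (hdim₁ : dimZ L₁ = dimZ (L₁ ∩ L₂)) (hdim₂ : dimZ (L₁ ∩ L₂) = dimZ L₂) :
    ∃ R₁ R₂ : Finset (Fin n → ℤ),
      (∀ r ∈ R₁, IsInteriorZ M₁ r) ∧ (∀ r ∈ R₂, IsInteriorZ M₂ r) ∧
      ∀ x₁ ∈ L₁, ∀ x₂ ∈ L₂,
        ((x₁ +ᵥ (AddSubmonoid.closure (R₁ : Set (Fin n → ℤ)) : Set (Fin n → ℤ))) ∩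
          (x₂ +ᵥ (AddSubmonoid.closure (R₂ : Set (Fin n → ℤ)) : Set (Fin n → ℤ)))).Nonempty := by
  classical
  obtain ⟨P₁, hP₁⟩ := hM₁
  obtain ⟨P₂, hP₂⟩ := hM₂
  subst hP₁ hP₂ hL₁ hL₂
  set C₁ := AddSubmonoid.closure (P₁ : Set (Fin n → ℤ)) with hC₁
  set C₂ := AddSubmonoid.closure (P₂ : Set (Fin n → ℤ)) with hC₂
  set L₁ : Set (Fin n → ℤ) := b₁ +ᵥ (C₁ : Set (Fin n → ℤ)) with hL₁
  set L₂ : Set (Fin n → ℤ) := b₂ +ᵥ (C₂ : Set (Fin n → ℤ)) with hL₂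
  -- nonemptiness of everything
  have hL₁ne : L₁.Nonempty := ⟨b₁ + 0, Set.mem_vadd_set.2 ⟨0, zero_mem _, by simp⟩⟩
  have hL₂ne : L₂.Nonempty := ⟨b₂ + 0, Set.mem_vadd_set.2 ⟨0, zero_mem _, by simp⟩⟩
  have hint_ne : (L₁ ∩ L₂).Nonempty := by
    by_contra hcon
    rw [Set.not_nonempty_iff_eq_empty] at hcon
    rw [dimZ_eq_dimQ, dimZ_eq_dimQ, hcon, Set.image_empty, dimQ_empty] at hdim₁
    rw [dimQ_eq_sInf ((hL₁ne.image _).ne_empty)] at hdim₁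
    exact WithBot.coe_ne_bot hdim₁
  obtain ⟨c, hc₁, hc₂⟩ := hint_ne
  have hintim_ne : iQ '' (L₁ ∩ L₂) ≠ ∅ := (Set.Nonempty.image iQ (⟨c, ⟨hc₁, hc₂⟩⟩ : (L₁ ∩ L₂).Nonempty)).ne_empty
  -- the common dimension e
  obtain ⟨e, he⟩ := dimQ_exists_nat hintim_ne
  -- lower bounds on e from the counting argument
  have hV₁e : Module.finrank ℚ (Submodule.span ℚ (iQ '' (P₁ : Set (Fin n → ℤ)))) ≤ e := by
    refine finrank_le_of_covP b₁ P₁ ?_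
    refine covP_of_dimQ ((hL₁ne.image _).ne_empty) ?_
    rw [← dimZ_eq_dimQ, hdim₁, dimZ_eq_dimQ, he]
  have hV₂e : Module.finrank ℚ (Submodule.span ℚ (iQ '' (P₂ : Set (Fin n → ℤ)))) ≤ e := by
    refine finrank_le_of_covP b₂ P₂ ?_
    refine covP_of_dimQ ((hL₂ne.image _).ne_empty) ?_
    rw [← dimZ_eq_dimQ, ← hdim₂, dimZ_eq_dimQ, he]
  -- the decomposition monoid
  set K : AddSubmonoid (Fin n → ℤ) := C₁ ⊓ C₂ with hK
  set W : Submodule ℚ (Fin n → ℚ) := Submodule.span ℚ (iQ '' (K : Set (Fin n → ℤ))) with hW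
  -- cover of the intersection by translates of W
  obtain ⟨F, hF⟩ := exists_finite_decomp b₁ b₂ P₁ P₂
  have hcovW : covP (iQ '' (L₁ ∩ L₂)) (Module.finrank ℚ W) := by
    refine ⟨F.card, fun _ => W, fun j => iQ ((F.equivFin.symm j : Fin n → ℤ)), ?_, ?_⟩
    · intro j
      rw [rankOf_coe_eq_finrank]
    · rintro _ ⟨x, hx, rfl⟩
      obtain ⟨f, hf, hxf₁, hxf₂⟩ := hF x hx
      refine Set.mem_iUnion.2 ⟨F.equivFin ⟨f, hf⟩, ?_⟩
      refine Set.mem_vadd_set.2 ⟨iQ (x - f), ?_, ?_⟩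
      · exact Submodule.subset_span ⟨x - f, AddSubmonoid.mem_inf.2 ⟨hxf₁, hxf₂⟩, rfl⟩
      · rw [vadd_eq_add]
        simp only [Equiv.symm_apply_apply]
        rw [← map_add]
        congr 1
        abel
  have heW : e ≤ Module.finrank ℚ W := by
    have := dimQ_le_of_covP hcovW
    rw [he] at this
    exact_mod_cast this
  -- W equals both spans
  have hWV₁ : W ≤ Submodule.span ℚ (iQ '' (P₁ : Set (Fin n → ℤ))) := by
    rw [hW]
    refine Submodule.span_le.2 ?_
    rintro _ ⟨x, hx, rfl⟩
    exact image_closure_subset_span P₁ ⟨x, (AddSubmonoid.mem_inf.1 hx).1, rfl⟩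
  have hWV₂ : W ≤ Submodule.span ℚ (iQ '' (P₂ : Set (Fin n → ℤ))) := by
    rw [hW]
    refine Submodule.span_le.2 ?_
    rintro _ ⟨x, hx, rfl⟩
    exact image_closure_subset_span P₂ ⟨x, (AddSubmonoid.mem_inf.1 hx).2, rfl⟩
  have hV₁W : W = Submodule.span ℚ (iQ '' (P₁ : Set (Fin n → ℤ))) :=
    Submodule.eq_of_le_of_finrank_le hWV₁ (by omega)
  have hV₂W : W = Submodule.span ℚ (iQ '' (P₂ : Set (Fin n → ℤ))) :=
    Submodule.eq_of_le_of_finrank_le hWV₂ (by omega)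
  -- the sums of generators
  set p : Fin P₁.card → (Fin n → ℤ) := fun i => (P₁.equivFin.symm i : Fin n → ℤ) with hp
  set q : Fin P₂.card → (Fin n → ℤ) := fun j => (P₂.equivFin.symm j : Fin n → ℤ) with hq
  set s₁ : Fin n → ℤ := ∑ i, p i with hs₁
  set s₂ : Fin n → ℤ := ∑ j, q j with hs₂
  have hs₁W : iQ s₁ ∈ W := by
    rw [hV₁W, hs₁, map_sum]
    exact sum_mem fun i _ => Submodule.subset_span ⟨p i, (P₁.equivFin.symm i).2, rfl⟩
  have hs₂W : iQ s₂ ∈ W := by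
    rw [hV₂W, hs₂, map_sum]
    exact sum_mem fun j _ => Submodule.subset_span ⟨q j, (P₂.equivFin.symm j).2, rfl⟩
  obtain ⟨D₁, hD₁, mu₁, hmu₁, mv₁, hmv₁, heq₁⟩ := denom_clear (S := K) hs₁W
  obtain ⟨D₂, hD₂, mu₂, hmu₂, mv₂, hmv₂, heq₂⟩ := denom_clear (S := K) hs₂W
  -- the common interior vector
  set a : Fin n → ℤ := mu₁ + mu₂ with ha
  have hmu₁C₁ : mu₁ ∈ C₁ := (AddSubmonoid.mem_inf.1 hmu₁).1
  have hmu₂C₁ : mu₂ ∈ C₁ := (AddSubmonoid.mem_inf.1 hmu₂).1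
  have hmu₁C₂ : mu₁ ∈ C₂ := (AddSubmonoid.mem_inf.1 hmu₁).2
  have hmu₂C₂ : mu₂ ∈ C₂ := (AddSubmonoid.mem_inf.1 hmu₂).2
  have hmv₁C₁ : mv₁ ∈ C₁ := (AddSubmonoid.mem_inf.1 hmv₁).1
  have hmv₂C₂ : mv₂ ∈ C₂ := (AddSubmonoid.mem_inf.1 hmv₂).2
  have hint₁ : IsInteriorZ (C₁ : Set (Fin n → ℤ)) a := by
    obtain ⟨u, hu⟩ := (mem_closure_iff_combo p P₁ (range_enum P₁) (mv₁ + mu₂)).1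
      (add_mem hmv₁C₁ hmu₂C₁)
    have haeq : a = ∑ i, (D₁ + u i) • p i := by
      have : a = D₁ • s₁ + (mv₁ + mu₂) := by
        rw [ha, ← heq₁]
        abel
      rw [this, hu, hs₁, Finset.smul_sum, ← Finset.sum_add_distrib]
      exact Finset.sum_congr rfl fun i _ => by rw [add_nsmul]
    rw [haeq]
    exact interior_of_pos_combo p P₁ (range_enum P₁) _ (fun i => by omega)
  have hint₂ : IsInteriorZ (C₂ : Set (Fin n → ℤ)) a := by
    obtain ⟨u, hu⟩ := (mem_closure_iff_combo q P₂ (range_enum P₂) (mv₂ + mu₁)).1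
      (add_mem hmv₂C₂ hmu₁C₂)
    have haeq : a = ∑ j, (D₂ + u j) • q j := by
      have : a = D₂ • s₂ + (mv₂ + mu₁) := by
        rw [ha, ← heq₂]
        abel
      rw [this, hu, hs₂, Finset.smul_sum, ← Finset.sum_add_distrib]
      exact Finset.sum_congr rfl fun j _ => by rw [add_nsmul]
    rw [haeq]
    exact interior_of_pos_combo q P₂ (range_enum P₂) _ (fun j => by omega)
  -- the answer sets
  refine ⟨insert a (P₁.image (a + ·)), insert a (P₂.image (a + ·)), ?_, ?_, ?_⟩
  · intro r hr
    rcases Finset.mem_insert.1 hr with rfl | hr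
    · exact hint₁
    · obtain ⟨x, hx, rfl⟩ := Finset.mem_image.1 hr
      exact interior_add_mem ⟨C₁, rfl⟩ hint₁ (AddSubmonoid.subset_closure hx)
  · intro r hr
    rcases Finset.mem_insert.1 hr with rfl | hr
    · exact hint₂
    · obtain ⟨x, hx, rfl⟩ := Finset.mem_image.1 hr
      exact interior_add_mem ⟨C₂, rfl⟩ hint₂ (AddSubmonoid.subset_closure hx)
  -- the main property
  intro x₁ hx₁ x₂ hx₂
  obtain ⟨μ₁, hμ₁, hcμ₁⟩ := Set.mem_vadd_set.1 hc₁
  obtain ⟨μ₂, hμ₂, hcμ₂⟩ := Set.mem_vadd_set.1 hc₂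
  obtain ⟨m₁, hm₁, hxm₁⟩ := Set.mem_vadd_set.1 hx₁
  obtain ⟨m₂, hm₂, hxm₂⟩ := Set.mem_vadd_set.1 hx₂
  obtain ⟨N₁, hN₁, m₁', hm₁', hNeq₁⟩ := hint₁.2 m₁ hm₁
  obtain ⟨N₂, hN₂, m₂', hm₂', hNeq₂⟩ := hint₂.2 m₂ hm₂
  obtain ⟨k₁, hk₁⟩ := absorb (P := P₁) a (add_mem hm₁' hμ₁)
  obtain ⟨k₂, hk₂⟩ := absorb (P := P₂) a (add_mem hm₂' hμ₂)
  set T : ℕ := max (k₁ + N₁) (k₂ + N₂) with hT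
  refine ⟨c + T • a, ?_, ?_⟩
  · have ht : k₁ ≤ T - N₁ := by omega
    have hmem := hk₁ (T - N₁) ht
    refine Set.mem_vadd_set.2 ⟨(T - N₁) • a + (m₁' + μ₁), hmem, ?_⟩
    rw [vadd_eq_add, ← hxm₁, ← hcμ₁]
    have hTeq : T • a = (T - N₁) • a + N₁ • a := by
      rw [← add_nsmul, Nat.sub_add_cancel (by omega)]
    rw [hTeq, hNeq₁]
    simp only [vadd_eq_add]
    abel
  · have ht : k₂ ≤ T - N₂ := by omega
    have hmem := hk₂ (T - N₂) ht
    refine Set.mem_vadd_set.2 ⟨(T - N₂) • a + (m₂' + μ₂), hmem, ?_⟩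
    rw [vadd_eq_add, ← hxm₂, ← hcμ₂]
    have hTeq : T • a = (T - N₂) • a + N₂ • a := by
      rw [← add_nsmul, Nat.sub_add_cancel (by omega)]
    rw [hTeq, hNeq₂]
    simp only [vadd_eq_add]
    abel
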